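/- Let P ∈ Dyck^m_{n1} (with prime decomposition P = P_1 ×_0 ... ×_0 P_s) and Q = Q_1 ×_0 ... ×_0 Q_r with all factors prime, and let λ ∈ Λ_r^i(P). If i > 0 then P *_λ Q = P_1 ×_0 ... ×_0 P_{s−1} ×_0 (P_s *_λ Q) with P_s *_λ Q prime; if i = 0 then λ = (λ_0,...,λ_{r−1},0) and P *_λ Q = P_1 ×_0 ... ×_0 P_{s−1} ×_0 (P_s *_λ (Q_1 ×_0 ... ×_0 Q_{j0})) ×_0 Q_{j0+1} ×_0 ... ×_0 Q_r, where j0 is the maximal index in {0,...,r−1} with λ_{j0} ≠ 0. -/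

import Mathlib

def stepVal (m : ℕ) (b : Bool) : ℤ := if b then (m : ℤ) else -1

def pathSum (m : ℕ) (P : List Bool) : ℤ := (P.map (stepVal m)).sum

def IsDyck (m : ℕ) (P : List Bool) : Prop :=
  pathSum m P = 0 ∧ ∀ Q : List Bool, Q <+: P → 0 ≤ pathSum m Q

def IsPrimePath (m : ℕ) (P : List Bool) : Prop :=
  P ≠ [] ∧ ¬ ∃ Q R : List Bool, Q ≠ [] ∧ R ≠ [] ∧ IsDyck m Q ∧ IsDyck m R ∧ P = Q ++ R

def Ltop (P : List Bool) : ℕ := (P.reverse.takeWhile (fun b => !b)).length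

def concatAt (P Q : List Bool) (j : ℕ) : List Bool :=
  P.take (P.length - j) ++ Q ++ List.replicate j false

def starLam (P : List Bool) : List (ℕ × List Bool) → List Bool
  | [] => P
  | (a, Q) :: rest => starLam (concatAt P Q (a + (rest.map Prod.fst).sum)) rest

def heightBefore (m : ℕ) (P : List Bool) (p : ℕ) : ℤ := pathSum m (P.take p)

def crossesAt (m : ℕ) (P : List Bool) (h : ℤ) (q : ℕ) : Prop :=
  if P.getD q true
    then heightBefore m P q ≤ h ∧ h < heightBefore m P q + m
    else h = heightBefore m P q - 1

noncomputable def colorOf (m : ℕ) (P : List Bool) (p : ℕ) : ℕ :=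
  (P.take (sSup {q | q < p ∧ crossesAt m P (heightBefore m P p - 1) q} + 1)).count true

noncomputable def topWord (m : ℕ) (P : List Bool) : List ℕ :=
  (List.range (Ltop P)).map (fun j => colorOf m P (P.length - Ltop P + j))

def suffixOK (m i : ℕ) (P : List Bool) (c : ℕ) : Prop :=
  (∀ x, ((topWord m P).drop ((topWord m P).length - c)).count x ≤ i)
  ∧ ∃ x, 1 ≤ x ∧ x ≤ P.count true
      ∧ ((topWord m P).drop ((topWord m P).length - c)).count x = i

def LambdaMem (m i : ℕ) (P : List Bool) (lam : List ℕ) (r : ℕ) : Prop :=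
  lam.length = r + 1 ∧ lam.sum = Ltop P ∧ suffixOK m i P (lam.getD r 0)

lemma pathSum_append (m : ℕ) (A B : List Bool) :
    pathSum m (A ++ B) = pathSum m A + pathSum m B := by
  simp [pathSum]

lemma pathSum_replicate (m k : ℕ) :
    pathSum m (List.replicate k false) = -(k : ℤ) := by
  simp [pathSum, stepVal]

lemma dyck_take {m : ℕ} {P : List Bool} (h : IsDyck m P) (n : ℕ) :
    0 ≤ pathSum m (P.take n) :=
  h.2 _ (List.take_prefix n P)

lemma isDyck_of {m : ℕ} {P : List Bool} (h0 : pathSum m P = 0)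
    (h : ∀ n, 0 ≤ pathSum m (P.take n)) : IsDyck m P := by
  refine ⟨h0, fun Q hQ => ?_⟩
  rw [List.prefix_iff_eq_take.mp hQ]
  exact h Q.length

lemma Ltop_le_length (P : List Bool) : Ltop P ≤ P.length := by
  have := (List.takeWhile_prefix (l := P.reverse) (fun b => !b)).length_le
  simpa [Ltop] using this

lemma drop_eq_replicate_of_le_Ltop {P : List Bool} {k : ℕ} (hk : k ≤ Ltop P) :
    P.drop (P.length - k) = List.replicate k false := by
  have hlen : k ≤ P.length := hk.trans (Ltop_le_length P)
  have h1 : P.drop (P.length - k) = (P.reverse.take k).reverse := by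
    rw [List.reverse_take]
    simp
  have h2 : P.reverse.take k = List.replicate k false := by
    have htw : P.reverse.take k = (P.reverse.takeWhile (fun b => !b)).take k := by
      conv_lhs => rw [← List.takeWhile_append_dropWhile (p := fun b => !b) (l := P.reverse)]
      exact List.take_append_of_le_length hk
    rw [htw]
    rw [List.eq_replicate_iff]
    constructor
    · simp; exact hk
    · intro b hb
      have := List.mem_takeWhile_imp (List.mem_of_mem_take hb)
      simpa using this
  rw [h1, h2]; simp

lemma isPrime_of_pos {m : ℕ} {P : List Bool} (hne : P ≠ [])
    (h : ∀ n, 0 < n → n < P.length → pathSum m (P.take n) ≠ 0) : IsPrimePath m P := by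
  refine ⟨hne, ?_⟩
  rintro ⟨Q, R, hQ, hR, hQd, hRd, rfl⟩
  refine h Q.length (by simpa using List.length_pos_iff.mpr hQ) ?_ ?_
  · simp [List.length_pos_iff.mpr hR]
  · rw [List.take_left]
    exact hQd.1

lemma prime_prefix_pos {m : ℕ} {P : List Bool} (hD : IsDyck m P) (hP : IsPrimePath m P)
    {n : ℕ} (h0 : 0 < n) (hn : n < P.length) : 0 < pathSum m (P.take n) := by
  rcases lt_or_eq_of_le (dyck_take hD n) with h | h
  · exact h
  exfalso
  apply hP.2
  refine ⟨P.take n, P.drop n, ?_, ?_, ?_, ?_, (List.take_append_drop n P).symm⟩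
  · intro hcon
    have h' : (P.take n).length = 0 := by rw [hcon]; rfl
    rw [List.length_take] at h'
    omega
  · intro hcon
    have := congrArg List.length hcon
    simp at this
    omega
  · exact isDyck_of h.symm (fun j => by
      rw [List.take_take]
      exact dyck_take hD _)
  · refine isDyck_of ?_ (fun j => ?_)
    · have := pathSum_append m (P.take n) (P.drop n)
      rw [List.take_append_drop] at this
      rw [hD.1] at this
      omega
    · have hadd := pathSum_append m (P.take n) ((P.drop n).take j)
      rw [← List.take_add] at hadd
      have := dyck_take hD (n + j)
      omega

lemma pathSum_take_of_trailing {m : ℕ} {T : List Bool} {k : ℕ} (hT : IsDyck m T)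
    (htf : T.drop (T.length - k) = List.replicate k false) (hk : k ≤ T.length) :
    pathSum m (T.take (T.length - k)) = k := by
  have := pathSum_append m (T.take (T.length - k)) (T.drop (T.length - k))
  rw [List.take_append_drop, hT.1, htf, pathSum_replicate] at this
  omega

lemma concatAt_isDyck {m : ℕ} {T Q : List Bool} {k : ℕ} (hT : IsDyck m T) (hQ : IsDyck m Q)
    (htf : T.drop (T.length - k) = List.replicate k false) (hk : k ≤ T.length) :
    IsDyck m (concatAt T Q k) := by
  set A := T.take (T.length - k) with hAdef
  have hA : pathSum m A = k := pathSum_take_of_trailing hT htf hk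
  have hAlen : A.length = T.length - k := by simp [hAdef]
  refine isDyck_of ?_ (fun n => ?_)
  · unfold concatAt
    rw [pathSum_append, pathSum_append, ← hAdef, hA, hQ.1, pathSum_replicate]
    ring
  · unfold concatAt
    rw [← hAdef]
    by_cases hn : n ≤ (A ++ Q).length
    · rw [List.take_append_of_le_length hn, List.take_append,
        pathSum_append]
      have h1 : 0 ≤ pathSum m (A.take n) := by
        rw [hAdef, List.take_take]
        exact dyck_take hT _
      have h2 : 0 ≤ pathSum m (Q.take (n - A.length)) := dyck_take hQ _
      omega
    · rw [List.take_append, List.take_of_length_le (by push_neg at hn; omega),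
        pathSum_append, pathSum_append, hA, hQ.1, List.take_replicate, pathSum_replicate]
      have : (n - (A ++ Q).length) ⊓ k ≤ k := inf_le_right
      push_cast
      omega

lemma concatAt_isPrime {m : ℕ} {T Q : List Bool} {k : ℕ} (hT : IsDyck m T)
    (hTp : IsPrimePath m T) (hQ : IsDyck m Q)
    (htf : T.drop (T.length - k) = List.replicate k false) (hk : k ≤ T.length)
    (hk1 : 1 ≤ k) : IsPrimePath m (concatAt T Q k) := by
  set A := T.take (T.length - k) with hAdef
  have hA : pathSum m A = k := pathSum_take_of_trailing hT htf hk
  have hAlen : A.length = T.length - k := by simp [hAdef]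
  have hTlen : 0 < T.length := by omega
  have hXlen : (concatAt T Q k).length = T.length + Q.length := by
    unfold concatAt
    rw [← hAdef]
    simp [hAlen]
    omega
  have hXne : concatAt T Q k ≠ [] :=
    List.ne_nil_of_length_pos (by rw [hXlen]; omega)
  refine isPrime_of_pos hXne (fun n h0 hn => ?_)
  rw [hXlen] at hn
  have : 0 < pathSum m ((concatAt T Q k).take n) := by
    unfold concatAt
    rw [← hAdef]
    by_cases hn1 : n ≤ A.length
    · rw [List.take_append_of_le_length (by simp; omega),
        List.take_append_of_le_length hn1, hAdef, List.take_take,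
        min_eq_left (by omega)]
      exact prime_prefix_pos hT hTp h0 (by omega)
    · by_cases hn2 : n ≤ (A ++ Q).length
      · rw [List.take_append_of_le_length hn2, List.take_append,
          List.take_of_length_le (by omega), pathSum_append, hA]
        have h2 : 0 ≤ pathSum m (Q.take (n - A.length)) := dyck_take hQ _
        omega
      · rw [List.take_append, List.take_of_length_le (by push_neg at hn2; omega),
          pathSum_append, pathSum_append, hA, hQ.1, List.take_replicate, pathSum_replicate]
        have hlt : (n - (A ++ Q).length) ⊓ k < k := by
          simp at hn2 ⊢
          omega
        push_cast
        omega
  omega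

lemma concatAt_length {T Q : List Bool} {k : ℕ} (hk : k ≤ T.length) :
    (concatAt T Q k).length = T.length + Q.length := by
  unfold concatAt
  simp
  omega

lemma concatAt_trailing {T Q : List Bool} {k k' : ℕ} (hk : k ≤ T.length) (hk' : k' ≤ k) :
    (concatAt T Q k).drop ((concatAt T Q k).length - k') = List.replicate k' false := by
  unfold concatAt
  rw [show T.take (T.length - k) ++ Q ++ List.replicate k false
      = (T.take (T.length - k) ++ Q) ++ List.replicate k false from by simp]
  set Y := T.take (T.length - k) ++ Q with hY
  have hlen : (Y ++ List.replicate k false).length = Y.length + k := by simp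
  rw [hlen, show Y.length + k - k' = Y.length + (k - k') from by omega,
    List.drop_length_add_append, List.drop_replicate]
  congr 1
  omega

lemma concatAt_append_left {A B Q : List Bool} {k : ℕ} (hk : k ≤ B.length) :
    concatAt (A ++ B) Q k = A ++ concatAt B Q k := by
  unfold concatAt
  rw [List.length_append, show A.length + B.length - k = A.length + (B.length - k) from by omega,
    List.take_append]
  simp

lemma starLam_append_left (A : List Bool) :
    ∀ (L : List (ℕ × List Bool)) (B : List Bool),
      (L.map Prod.fst).sum ≤ B.length →
      starLam (A ++ B) L = A ++ starLam B L
  | [], B, _ => rfl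
  | (a, Q) :: rest, B, h => by
    have hsum : a + (rest.map Prod.fst).sum ≤ B.length := by simpa using h
    rw [starLam, starLam, concatAt_append_left hsum]
    refine starLam_append_left A rest _ ?_
    rw [concatAt_length (by omega)]
    omega

lemma starLam_zeros :
    ∀ (L : List (ℕ × List Bool)) (T : List Bool),
      (∀ p ∈ L, p.1 = 0) → starLam T L = T ++ (L.map Prod.snd).flatten
  | [], T, _ => by simp [starLam]
  | (a, Q) :: rest, T, h => by
    have ha : a = 0 := h _ List.mem_cons_self
    have hsum : (rest.map Prod.fst).sum = 0 := by
      rw [List.sum_eq_zero]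
      intro x hx
      obtain ⟨p, hp, rfl⟩ := List.mem_map.mp hx
      exact h p (List.mem_cons_of_mem _ hp)
    rw [starLam, starLam_zeros rest _ (fun p hp => h p (List.mem_cons_of_mem _ hp))]
    subst ha
    rw [hsum]
    unfold concatAt
    simp

lemma starLam_split :
    ∀ (L1 : List (ℕ × List Bool)) (T : List Bool) (L2 : List (ℕ × List Bool)),
      (∀ p ∈ L2, p.1 = 0) →
      starLam T (L1 ++ L2) = starLam T L1 ++ (L2.map Prod.snd).flatten
  | [], T, L2, h => starLam_zeros L2 T h
  | (a, Q) :: rest, T, L2, h => by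
    have h2 : (L2.map Prod.fst).sum = 0 := by
      rw [List.sum_eq_zero]
      intro x hx
      obtain ⟨p, hp, rfl⟩ := List.mem_map.mp hx
      exact h p hp
    have hsum : ((rest ++ L2).map Prod.fst).sum = (rest.map Prod.fst).sum := by
      rw [List.map_append, List.sum_append, h2, add_zero]
    rw [List.cons_append, starLam, starLam, hsum]
    exact starLam_split rest _ L2 h

lemma starLam_prime {m : ℕ} :
    ∀ (L : List (ℕ × List Bool)) (T : List Bool),
      IsDyck m T → IsPrimePath m T →
      (∀ p ∈ L, IsDyck m p.2) →
      (L.map Prod.fst).sum ≤ T.length →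
      T.drop (T.length - (L.map Prod.fst).sum) = List.replicate ((L.map Prod.fst).sum) false →
      (∀ n, n < L.length → 1 ≤ ((L.drop n).map Prod.fst).sum) →
      IsDyck m (starLam T L) ∧ IsPrimePath m (starLam T L)
  | [], T, hT, hTp, _, _, _, _ => ⟨hT, hTp⟩
  | (a, Q) :: rest, T, hT, hTp, hQ, hle, htf, hpos => by
    set k := a + (rest.map Prod.fst).sum with hk
    have hsum : (((a, Q) :: rest).map Prod.fst).sum = k := by simp [hk]
    rw [hsum] at hle htf
    have hk1 : 1 ≤ k := by
      have := hpos 0 (by simp)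
      simpa [hk] using this
    have hQd : IsDyck m Q := hQ _ List.mem_cons_self
    have hD' := concatAt_isDyck hT hQd htf hle
    have hP' := concatAt_isPrime hT hTp hQd htf hle hk1
    rw [starLam]
    refine starLam_prime rest _ hD' hP'
      (fun p hp => hQ p (List.mem_cons_of_mem _ hp)) ?_ ?_ ?_
    · rw [concatAt_length hle]
      omega
    · exact concatAt_trailing hle (by omega)
    · intro n hn
      have := hpos (n + 1) (by simpa using hn)
      simpa using this

lemma mem_true_of_dyck {m : ℕ} {P : List Bool} (hD : IsDyck m P) (hne : P ≠ []) :
    true ∈ P := by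
  by_contra h
  have hall : ∀ b ∈ P, b = false := by
    intro b hb
    cases b
    · rfl
    · exact absurd hb h
  have : P = List.replicate P.length false := List.eq_replicate_iff.mpr ⟨rfl, hall⟩
  have h0 := hD.1
  rw [this, pathSum_replicate] at h0
  have : P.length = 0 := by omega
  exact hne (List.eq_nil_of_length_eq_zero this)

lemma Ltop_append {A B : List Bool} (hB : true ∈ B) : Ltop (A ++ B) = Ltop B := by
  unfold Ltop
  rw [List.reverse_append, List.takeWhile_append]
  rw [if_neg]
  intro hlen
  have heq : B.reverse.takeWhile (fun b => !b) = B.reverse :=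
    (List.takeWhile_prefix _).eq_of_length hlen
  have := List.takeWhile_eq_self_iff.mp heq true (by simpa using hB)
  simp at this

lemma Ltop_pos {m : ℕ} (hm : 1 ≤ m) {P : List Bool} (hD : IsDyck m P) (hne : P ≠ []) :
    1 ≤ Ltop P := by
  rcases List.eq_nil_or_concat P with h | ⟨Y, b, hP⟩
  · exact absurd h hne
  rw [List.concat_eq_append] at hP
  cases b
  · rw [hP]
    unfold Ltop
    simp [List.takeWhile_cons]
  · exfalso
    have hY : 0 ≤ pathSum m Y := by
      have : Y <+: P := ⟨[true], hP.symm⟩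
      exact hD.2 Y this
    have h0 := hD.1
    rw [hP, pathSum_append] at h0
    have : pathSum m [true] = (m : ℤ) := by simp [pathSum, stepVal]
    rw [this] at h0
    omega

/-- With `P = P_1 ×₀ … ×₀ P_s` and `Q = Q_1 ×₀ … ×₀ Q_r` (all factors prime)
and `λ ∈ Λ_r^i(P)`: if `i > 0` then
`P *_λ Q = P_1 ×₀ … ×₀ P_{s−1} ×₀ (P_s *_λ Q)` with `P_s *_λ Q` prime; if
`i = 0` then `λ_r = 0` and `P *_λ Q = P_1 ×₀ … ×₀ P_{s−1} ×₀
(P_s *_λ (Q_1 ×₀ … ×₀ Q_{j₀})) ×₀ Q_{j₀+1} ×₀ … ×₀ Q_r`, where `j₀` is the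
maximal index in `{0,…,r−1}` with `λ_{j₀} ≠ 0`. -/
theorem starLam_prime_factorization (m : ℕ) (hm : 1 ≤ m) (i : ℕ) (hi : i ≤ m)
    (Ps Qs : List (List Bool)) (hPne : Ps ≠ []) (hQne : Qs ≠ [])
    (hPs : ∀ R ∈ Ps, IsDyck m R ∧ IsPrimePath m R)
    (hQs : ∀ Q ∈ Qs, IsDyck m Q ∧ IsPrimePath m Q)
    (lam : List ℕ) (hlam : LambdaMem m i Ps.flatten lam Qs.length) :
    (0 < i →
      starLam Ps.flatten (lam.tail.zip Qs)
          = Ps.dropLast.flatten ++ starLam (Ps.getLastD []) (lam.tail.zip Qs)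
        ∧ IsPrimePath m (starLam (Ps.getLastD []) (lam.tail.zip Qs)))
    ∧ (i = 0 →
      lam.getD Qs.length 0 = 0 ∧
      ∃ j0 : ℕ, j0 < Qs.length ∧ lam.getD j0 0 ≠ 0
        ∧ (∀ j, j0 < j → j < Qs.length → lam.getD j 0 = 0)
        ∧ starLam Ps.flatten (lam.tail.zip Qs)
            = Ps.dropLast.flatten
              ++ starLam (Ps.getLastD []) ((lam.tail.take j0).zip (Qs.take j0))
              ++ (Qs.drop j0).flatten) := by
  set r := Qs.length with hr
  obtain ⟨hlamlen, hlamsum, hOK⟩ := hlam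
  have hr1 : 1 ≤ r := List.length_pos_iff.mpr hQne
  have hgl : Ps.getLastD [] = Ps.getLast hPne := by
    rw [List.getLastD_eq_getLast?, List.getLast?_eq_getLast hPne]
    rfl
  have hPsmem : Ps.getLastD [] ∈ Ps := by rw [hgl]; exact List.getLast_mem hPne
  obtain ⟨hPsD, hPsP⟩ := hPs _ hPsmem
  have hPsne : Ps.getLastD [] ≠ [] := hPsP.1
  have hsplit : Ps.flatten = Ps.dropLast.flatten ++ Ps.getLastD [] := by
    conv_lhs => rw [← List.dropLast_append_getLast hPne]
    rw [List.flatten_append, hgl]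
    simp
  have htrue : true ∈ Ps.getLastD [] := mem_true_of_dyck hPsD hPsne
  have hLt : Ltop Ps.flatten = Ltop (Ps.getLastD []) := by
    rw [hsplit]; exact Ltop_append htrue
  have hLt1 : 1 ≤ Ltop (Ps.getLastD []) := Ltop_pos hm hPsD hPsne
  have htail_len : lam.tail.length = r := by rw [List.length_tail, hlamlen]; omega
  have hmapfst : (lam.tail.zip Qs).map Prod.fst = lam.tail :=
    List.map_fst_zip (by rw [htail_len])
  have hlamne : lam ≠ [] := by
    intro h; rw [h] at hlamlen; simp at hlamlen
  have htsum : lam.tail.sum ≤ Ltop (Ps.getLastD []) := by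
    rw [← hLt, ← hlamsum]
    conv_rhs => rw [← List.cons_head_tail hlamne]
    rw [List.sum_cons]
    omega
  have hsumlen : ((lam.tail.zip Qs).map Prod.fst).sum ≤ (Ps.getLastD []).length := by
    rw [hmapfst]; exact htsum.trans (Ltop_le_length _)
  have hQdyck : ∀ p ∈ lam.tail.zip Qs, IsDyck m p.2 := by
    intro p hp
    obtain ⟨a, b⟩ := p
    exact (hQs b (List.of_mem_zip hp).2).1
  have htw_len : (topWord m Ps.flatten).length = Ltop Ps.flatten := by simp [topWord]
  have hrlt : r < lam.length := by omega
  constructor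
  · intro hipos
    have hc1 : 1 ≤ lam.getD r 0 := by
      obtain ⟨x, _, _, hcx⟩ := hOK.2
      have hne' : (topWord m Ps.flatten).drop
          ((topWord m Ps.flatten).length - lam.getD r 0) ≠ [] := by
        intro h
        rw [h] at hcx
        simp at hcx
        omega
      have hlen' := List.length_pos_iff.mpr hne'
      rw [List.length_drop] at hlen'
      omega
    obtain ⟨rr, hrr⟩ : ∃ rr, r = rr + 1 := ⟨r - 1, by omega⟩
    have hlast : lam.getD r 0 = lam.tail.getD rr 0 := by
      conv_lhs => rw [← List.cons_head_tail hlamne]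
      rw [hrr, List.getD_cons_succ]
    have hpos : ∀ n, n < (lam.tail.zip Qs).length →
        1 ≤ (((lam.tail.zip Qs).drop n).map Prod.fst).sum := by
      intro n hn
      rw [List.map_drop, hmapfst]
      have hL : (lam.tail.zip Qs).length = r := by
        rw [List.length_zip, htail_len, hr]; omega
      rw [hL] at hn
      have hmem : lam.tail.getD rr 0 ∈ lam.tail.drop n := by
        rw [List.mem_iff_getElem]
        refine ⟨rr - n, by rw [List.length_drop, htail_len]; omega, ?_⟩
        rw [List.getElem_drop,
          List.getD_eq_getElem _ _ (by rw [htail_len]; omega : rr < lam.tail.length)]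
        congr 1
        omega
      have := List.single_le_sum (l := lam.tail.drop n) (fun x _ => Nat.zero_le x) _ hmem
      omega
    refine ⟨?_, ?_⟩
    · rw [hsplit]
      exact starLam_append_left Ps.dropLast.flatten (lam.tail.zip Qs) _ hsumlen
    · exact (starLam_prime _ _ hPsD hPsP hQdyck hsumlen
        (by rw [hmapfst]; exact drop_eq_replicate_of_le_Ltop htsum) hpos).2
  · intro hi0
    subst hi0
    have hdropnil : (topWord m Ps.flatten).drop
        ((topWord m Ps.flatten).length - lam.getD r 0) = [] := by
      rcases hlist : (topWord m Ps.flatten).drop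
          ((topWord m Ps.flatten).length - lam.getD r 0) with _ | ⟨y, ys⟩
      · rfl
      · exfalso
        have hcy := hOK.1 y
        rw [hlist] at hcy
        simp [List.count_cons] at hcy
    have hlen0 := congrArg List.length hdropnil
    rw [List.length_drop, htw_len, hLt, List.length_nil] at hlen0
    have hc0 : lam.getD r 0 = 0 := by omega
    have hex : ∃ j, j < r ∧ lam.getD j 0 ≠ 0 := by
      by_contra hno
      push_neg at hno
      have hzsum : lam.sum = 0 := by
        apply List.sum_eq_zero
        intro x hx
        obtain ⟨n, hn, rfl⟩ := List.mem_iff_getElem.mp hx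
        have hnd : lam.getD n 0 = 0 := by
          rcases lt_or_ge n r with h | h
          · exact hno n h
          · have : n = r := by omega
            rw [this]; exact hc0
        rwa [List.getD_eq_getElem _ _ hn] at hnd
      rw [hlamsum, hLt] at hzsum
      omega
    obtain ⟨jw, hjw1, hjw2⟩ := hex
    set j0 := Nat.findGreatest (fun j => lam.getD j 0 ≠ 0) (r - 1) with hj0
    have hj0p : lam.getD j0 0 ≠ 0 :=
      Nat.findGreatest_spec (P := fun j => lam.getD j 0 ≠ 0) (by omega : jw ≤ r - 1) hjw2
    have hj0lt : j0 < r := lt_of_le_of_lt (Nat.findGreatest_le _) (by omega)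
    have hj0max : ∀ j, j0 < j → j < r → lam.getD j 0 = 0 := by
      intro j h1 h2
      by_contra hne2
      exact (Nat.findGreatest_is_greatest h1 (by omega)) hne2
    refine ⟨hc0, j0, hj0lt, hj0p, hj0max, ?_⟩
    have hLzip : lam.tail.zip Qs
        = (lam.tail.take j0).zip (Qs.take j0) ++ (lam.tail.drop j0).zip (Qs.drop j0) := by
      conv_lhs => rw [← List.take_append_drop j0 lam.tail, ← List.take_append_drop j0 Qs]
      rw [List.zip_append (by rw [List.length_take, List.length_take, htail_len])]
    have hzero : ∀ p ∈ (lam.tail.drop j0).zip (Qs.drop j0), p.1 = 0 := by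
      intro p hp
      obtain ⟨a, b⟩ := p
      have ha : a ∈ lam.tail.drop j0 := (List.of_mem_zip hp).1
      obtain ⟨t, ht, rfl⟩ := List.mem_iff_getElem.mp ha
      have ht' : t < lam.tail.length - j0 := by
        rw [List.length_drop] at ht; exact ht
      have hlt2 : j0 + t + 1 < lam.length := by
        rw [htail_len] at ht'; omega
      have h3 : lam.getD (j0 + t + 1) 0 = 0 := by
        rcases lt_or_ge (j0 + t + 1) r with h | h
        · exact hj0max _ (by omega) h
        · have hEq : j0 + t + 1 = r := by
            rw [htail_len] at ht'; omega
          rw [hEq]; exact hc0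
      rw [List.getD_eq_getElem _ _ hlt2] at h3
      rw [List.getElem_drop, List.getElem_tail]
      exact h3
    rw [hsplit, starLam_append_left Ps.dropLast.flatten (lam.tail.zip Qs) _ hsumlen,
      hLzip, starLam_split _ _ _ hzero,
      List.map_snd_zip (by rw [List.length_drop, List.length_drop, htail_len]),
      List.append_assoc]
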